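/- For every integer c ≥ 1 and integer x ≥ 2, x³/binom(xc,c) ≤ 8/binom(2c,c); equivalently, the sequence x ↦ x³/binom(xc,c) is non-increasing for x ≥ 2. -/

import Mathlib

open Finset

/-- `UParts c k ℓ S`: `S` is a family of `ℓ` pairwise disjoint `c`-subsets of `[ck]`. -/
def UParts (c k ℓ : ℕ) (S : Finset (Finset (Fin (c * k)))) : Prop :=
  S.card = ℓ ∧ (∀ e ∈ S, e.card = c) ∧
    ∀ e ∈ S, ∀ f ∈ S, e ≠ f → Disjoint e f

/-- `UPartition c k F`: `F` is a `c`-uniform partition of `[ck]` into `k` blocks. -/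
def UPartition (c k : ℕ) (F : Finset (Finset (Fin (c * k)))) : Prop :=
  UParts c k k F ∧ ∀ x : Fin (c * k), ∃ e ∈ F, x ∈ e

/-- Cross `t`-intersecting families: any two members from different families share `≥ t` blocks. -/
def CrossInt (c k t : ℕ) (F G : Finset (Finset (Finset (Fin (c * k))))) : Prop :=
  ∀ A ∈ F, ∀ B ∈ G, t ≤ (A ∩ B).card

/-- `S` is a `t`-cover of the family `F`: a family of pairwise disjoint `c`-subsets meeting
every member of `F` in at least `t` blocks. -/
def IsTCover (c k t : ℕ) (F : Finset (Finset (Finset (Fin (c * k)))))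
    (S : Finset (Finset (Fin (c * k)))) : Prop :=
  UParts c k S.card S ∧ ∀ A ∈ F, t ≤ (S ∩ A).card

/-- The `t`-covering number: minimum size of a `t`-cover. -/
noncomputable def tau (c k t : ℕ) (F : Finset (Finset (Finset (Fin (c * k))))) : ℕ :=
  sInf {s | ∃ S, IsTCover c k t F S ∧ S.card = s}

/-- `θ(c,k,z) = (1/(k-z)!) · ∏_{i=z}^{k-1} C((k-i)c, c)`. -/
def theta (c k z : ℕ) : ℚ :=
  (1 / ((k - z).factorial : ℚ)) * ∏ i ∈ Finset.Ico z k, ((((k - i) * c).choose c : ℕ) : ℚ)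

/-- `g(c,k,t,z) = θ(c,k,z)·C(z,t)·∏_{j=1}^{z-t}(k-(t+j-1))`. -/
def gfun (c k t z : ℕ) : ℚ :=
  theta c k z * ((z.choose t : ℕ) : ℚ) * ∏ j ∈ Finset.Icc 1 (z - t), ((k - (t + j - 1) : ℕ) : ℚ)

/-- `f₀(c,k,t) = (k-t-1)·θ(c,k,t+1) − C(k-t-1,2)·θ(c,k,t+2)`. -/
def f0 (c k t : ℕ) : ℚ :=
  ((k - t - 1 : ℕ) : ℚ) * theta c k (t + 1) - (((k - t - 1).choose 2 : ℕ) : ℚ) * theta c k (t + 2)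

/-- `f₂(c,k,t) = (t+2)·θ(c,k,t+1) − (t+1)(k-t-1)·θ(c,k,t+2)`. -/
def f2q (c k t : ℕ) : ℚ :=
  ((t : ℚ) + 2) * theta c k (t + 1) - ((t : ℚ) + 1) * ((k - t - 1 : ℕ) : ℚ) * theta c k (t + 2)


lemma stepA (c x : ℕ) (hc : 3 ≤ c) (hx : 1 ≤ x) :
    (x + 1) ^ c * (x * c).descFactorial c ≤ x ^ c * ((x + 1) * c).descFactorial c := by
  rw [Nat.descFactorial_eq_prod_range, Nat.descFactorial_eq_prod_range]
  calc (x + 1) ^ c * ∏ i ∈ Finset.range c, (x * c - i)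
      = ∏ i ∈ Finset.range c, (x + 1) * (x * c - i) := by
        rw [Finset.prod_mul_distrib, Finset.prod_const, Finset.card_range]
    _ ≤ ∏ i ∈ Finset.range c, x * ((x + 1) * c - i) := ?_
    _ = x ^ c * ∏ i ∈ Finset.range c, ((x + 1) * c - i) := by
        rw [Finset.prod_mul_distrib, Finset.prod_const, Finset.card_range]
  apply Finset.prod_le_prod'
  intro i hi
  simp only [Finset.mem_range] at hi
  have h1 : i ≤ x * c := le_trans hi.le (Nat.le_mul_of_pos_left c hx)
  have h2 : (x + 1) * c = x * c + c := by ring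
  have h3 : x * c + c - i = (x * c - i) + c := by omega
  rw [h2, h3, Nat.mul_add, Nat.add_mul, one_mul]
  have : x * c - i ≤ x * c := Nat.sub_le _ _
  nlinarith

lemma stepB (c x : ℕ) (hc : 3 ≤ c) (hx : 1 ≤ x) :
    (x + 1) ^ 3 * (x * c).choose c ≤ x ^ 3 * ((x + 1) * c).choose c := by
  have hA := stepA c x hc hx
  rw [Nat.descFactorial_eq_factorial_mul_choose, Nat.descFactorial_eq_factorial_mul_choose] at hA
  have hB : (x + 1) ^ c * (x * c).choose c ≤ x ^ c * ((x + 1) * c).choose c := by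
    rw [show (x + 1) ^ c * (c.factorial * (x * c).choose c)
          = c.factorial * ((x + 1) ^ c * (x * c).choose c) from by ring,
        show x ^ c * (c.factorial * ((x + 1) * c).choose c)
          = c.factorial * (x ^ c * ((x + 1) * c).choose c) from by ring] at hA
    exact Nat.le_of_mul_le_mul_left hA (Nat.factorial_pos c)
  have hxpos : 0 < x ^ (c - 3) := Nat.pow_pos hx
  apply Nat.le_of_mul_le_mul_right _ hxpos
  calc (x + 1) ^ 3 * (x * c).choose c * x ^ (c - 3)
      ≤ (x + 1) ^ 3 * (x * c).choose c * (x + 1) ^ (c - 3) := by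
        exact Nat.mul_le_mul_left _ (Nat.pow_le_pow_left (by omega) _)
    _ = (x + 1) ^ c * (x * c).choose c := by
        rw [mul_right_comm, ← pow_add]
        congr 2
        omega
    _ ≤ x ^ c * ((x + 1) * c).choose c := hB
    _ = x ^ 3 * ((x + 1) * c).choose c * x ^ (c - 3) := by
        rw [mul_right_comm, ← pow_add]
        congr 2
        omega

lemma mainNat (c x : ℕ) (hc : 3 ≤ c) (hx : 2 ≤ x) :
    x ^ 3 * (2 * c).choose c ≤ 8 * (x * c).choose c := by
  induction x with
  | zero => omega
  | succ n ih =>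
    rcases Nat.lt_or_ge n 2 with hn | hn
    · interval_cases n
      · omega
      · norm_num
    · have h1 := ih hn
      have h2 := stepB c n hc (by omega)
      have hnpos : 0 < n ^ 3 := Nat.pow_pos (by omega)
      apply Nat.le_of_mul_le_mul_left _ hnpos
      calc n ^ 3 * ((n + 1) ^ 3 * (2 * c).choose c)
          = (n + 1) ^ 3 * (n ^ 3 * (2 * c).choose c) := by ring
        _ ≤ (n + 1) ^ 3 * (8 * (n * c).choose c) := Nat.mul_le_mul_left _ h1
        _ = 8 * ((n + 1) ^ 3 * (n * c).choose c) := by ring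
        _ ≤ 8 * (n ^ 3 * ((n + 1) * c).choose c) := Nat.mul_le_mul_left _ h2
        _ = n ^ 3 * (8 * ((n + 1) * c).choose c) := by ring

theorem stmt12 (c x : ℕ) (hc : 3 ≤ c) (hx : 2 ≤ x) :
    ((x : ℚ) ^ 3) / (((x * c).choose c : ℕ) : ℚ) ≤ 8 / (((2 * c).choose c : ℕ) : ℚ) := by
  have p1 : (0:ℚ) < (((x * c).choose c : ℕ) : ℚ) := by
    exact_mod_cast Nat.choose_pos (Nat.le_mul_of_pos_left c (by omega))
  have p2 : (0:ℚ) < (((2 * c).choose c : ℕ) : ℚ) := by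
    exact_mod_cast Nat.choose_pos (Nat.le_mul_of_pos_left c (by omega))
  rw [div_le_div_iff₀ p1 p2]
  have := mainNat c x hc hx
  have : ((x ^ 3 * (2 * c).choose c : ℕ) : ℚ) ≤ ((8 * (x * c).choose c : ℕ) : ℚ) := by
    exact_mod_cast this
  push_cast at this
  linarith
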